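/- In End(C^{1|1})^{⊗3}: P^{12}P^{13}Q^{23} = P^{23}Q^{13}P^{12} = Q^{12}P^{13}P^{23} = Q^{23}Q^{13}Q^{12}, and Q^{23}P^{13}P^{12} = P^{12}Q^{13}P^{23} = P^{23}P^{13}Q^{12} = Q^{12}Q^{13}Q^{23}. -/

import Mathlib

/-- Index set `{1,-1}` of `C^{1|1}`: `inl 0 = 1`, `inr 0 = -1`. -/
abbrev I1 := Fin 1 ⊕ Fin 1

def I1.neg : I1 → I1 := Sum.swap

def I1.par : I1 → ZMod 2
  | Sum.inl _ => 0
  | Sum.inr _ => 1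

/-- Matrix unit `ε_{ij}` of `End(C^{1|1})`. -/
noncomputable def eps (i j : I1) : Matrix I1 I1 ℂ := Matrix.single i j 1

/-- Super (Koszul-signed) tensor product `a ⊗ b ⊗ c` of three elements of `End(C^{1|1})`,
realized as the operator on `(C^{1|1})^{⊗3}`:
`(a⊗b⊗c)(v₁⊗v₂⊗v₃) = (-1)^{(|b|+|c|)|v₁| + |c||v₂|} a v₁ ⊗ b v₂ ⊗ c v₃`.
This realization is an isomorphism of the super tensor product algebra `End(C^{1|1})^{⊗3}`
onto `End((C^{1|1})^{⊗3})`. -/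
noncomputable def tmul3 (a b c : Matrix I1 I1 ℂ) :
    Matrix (I1 × I1 × I1) (I1 × I1 × I1) ℂ :=
  Matrix.of fun p q =>
    ((-1 : ℂ) ^ ((((I1.par p.2.1 + I1.par q.2.1) + (I1.par p.2.2 + I1.par q.2.2)) * I1.par q.1
        + (I1.par p.2.2 + I1.par q.2.2) * I1.par q.2.1).val))
      * a p.1 q.1 * b p.2.1 q.2.1 * c p.2.2 q.2.2

/-- `P^{12}` in `End(C^{1|1})^{⊗3}`. -/
noncomputable def P12 : Matrix (I1 × I1 × I1) (I1 × I1 × I1) ℂ :=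
  ∑ r : I1, ∑ s : I1, ((-1 : ℂ) ^ (I1.par s).val) • tmul3 (eps r s) (eps s r) 1

/-- `P^{13}` in `End(C^{1|1})^{⊗3}`. -/
noncomputable def P13 : Matrix (I1 × I1 × I1) (I1 × I1 × I1) ℂ :=
  ∑ r : I1, ∑ s : I1, ((-1 : ℂ) ^ (I1.par s).val) • tmul3 (eps r s) 1 (eps s r)

/-- `P^{23}` in `End(C^{1|1})^{⊗3}`. -/
noncomputable def P23 : Matrix (I1 × I1 × I1) (I1 × I1 × I1) ℂ :=
  ∑ r : I1, ∑ s : I1, ((-1 : ℂ) ^ (I1.par s).val) • tmul3 1 (eps r s) (eps s r)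

/-- `Q^{12}` in `End(C^{1|1})^{⊗3}`. -/
noncomputable def Q12 : Matrix (I1 × I1 × I1) (I1 × I1 × I1) ℂ :=
  ∑ r : I1, ∑ s : I1,
    ((-1 : ℂ) ^ (I1.par s).val) • tmul3 (eps r s) (eps (I1.neg s) (I1.neg r)) 1

/-- `Q^{13}` in `End(C^{1|1})^{⊗3}`. -/
noncomputable def Q13 : Matrix (I1 × I1 × I1) (I1 × I1 × I1) ℂ :=
  ∑ r : I1, ∑ s : I1,
    ((-1 : ℂ) ^ (I1.par s).val) • tmul3 (eps r s) 1 (eps (I1.neg s) (I1.neg r))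

/-- `Q^{23}` in `End(C^{1|1})^{⊗3}`. -/
noncomputable def Q23 : Matrix (I1 × I1 × I1) (I1 × I1 × I1) ℂ :=
  ∑ r : I1, ∑ s : I1,
    ((-1 : ℂ) ^ (I1.par s).val) • tmul3 1 (eps r s) (eps (I1.neg s) (I1.neg r))


namespace Stmt5Aux

def epsZ (i j : I1) : Matrix I1 I1 ℤ := Matrix.single i j 1

def tmul3Z (a b c : Matrix I1 I1 ℤ) :
    Matrix (I1 × I1 × I1) (I1 × I1 × I1) ℤ :=
  Matrix.of fun p q =>
    ((-1 : ℤ) ^ ((((I1.par p.2.1 + I1.par q.2.1) + (I1.par p.2.2 + I1.par q.2.2)) * I1.par q.1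
        + (I1.par p.2.2 + I1.par q.2.2) * I1.par q.2.1).val))
      * a p.1 q.1 * b p.2.1 q.2.1 * c p.2.2 q.2.2

def P12Z : Matrix (I1 × I1 × I1) (I1 × I1 × I1) ℤ :=
  ∑ r : I1, ∑ s : I1, ((-1 : ℤ) ^ (I1.par s).val) • tmul3Z (epsZ r s) (epsZ s r) 1
def P13Z : Matrix (I1 × I1 × I1) (I1 × I1 × I1) ℤ :=
  ∑ r : I1, ∑ s : I1, ((-1 : ℤ) ^ (I1.par s).val) • tmul3Z (epsZ r s) 1 (epsZ s r)
def P23Z : Matrix (I1 × I1 × I1) (I1 × I1 × I1) ℤ :=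
  ∑ r : I1, ∑ s : I1, ((-1 : ℤ) ^ (I1.par s).val) • tmul3Z 1 (epsZ r s) (epsZ s r)
def Q12Z : Matrix (I1 × I1 × I1) (I1 × I1 × I1) ℤ :=
  ∑ r : I1, ∑ s : I1,
    ((-1 : ℤ) ^ (I1.par s).val) • tmul3Z (epsZ r s) (epsZ (I1.neg s) (I1.neg r)) 1
def Q13Z : Matrix (I1 × I1 × I1) (I1 × I1 × I1) ℤ :=
  ∑ r : I1, ∑ s : I1,
    ((-1 : ℤ) ^ (I1.par s).val) • tmul3Z (epsZ r s) 1 (epsZ (I1.neg s) (I1.neg r))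
def Q23Z : Matrix (I1 × I1 × I1) (I1 × I1 × I1) ℤ :=
  ∑ r : I1, ∑ s : I1,
    ((-1 : ℤ) ^ (I1.par s).val) • tmul3Z 1 (epsZ r s) (epsZ (I1.neg s) (I1.neg r))

noncomputable def cmap : Matrix (I1 × I1 × I1) (I1 × I1 × I1) ℤ →+*
    Matrix (I1 × I1 × I1) (I1 × I1 × I1) ℂ :=
  (Int.castRingHom ℂ).mapMatrix

lemma castP12 : P12 = cmap P12Z := by
  ext p q
  simp [P12, P12Z, cmap, tmul3, tmul3Z, eps, epsZ, Matrix.sum_apply, Matrix.map_apply,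
    Matrix.single, Matrix.one_apply]
lemma castP13 : P13 = cmap P13Z := by
  ext p q
  simp [P13, P13Z, cmap, tmul3, tmul3Z, eps, epsZ, Matrix.sum_apply, Matrix.map_apply,
    Matrix.single, Matrix.one_apply]
lemma castP23 : P23 = cmap P23Z := by
  ext p q
  simp [P23, P23Z, cmap, tmul3, tmul3Z, eps, epsZ, Matrix.sum_apply, Matrix.map_apply,
    Matrix.single, Matrix.one_apply]
lemma castQ12 : Q12 = cmap Q12Z := by
  ext p q
  simp [Q12, Q12Z, cmap, tmul3, tmul3Z, eps, epsZ, Matrix.sum_apply, Matrix.map_apply,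
    Matrix.single, Matrix.one_apply]
lemma castQ13 : Q13 = cmap Q13Z := by
  ext p q
  simp [Q13, Q13Z, cmap, tmul3, tmul3Z, eps, epsZ, Matrix.sum_apply, Matrix.map_apply,
    Matrix.single, Matrix.one_apply]
lemma castQ23 : Q23 = cmap Q23Z := by
  ext p q
  simp [Q23, Q23Z, cmap, tmul3, tmul3Z, eps, epsZ, Matrix.sum_apply, Matrix.map_apply,
    Matrix.single, Matrix.one_apply]

lemma z1 : P12Z * P13Z * Q23Z = P23Z * Q13Z * P12Z := by decide
lemma z2 : P23Z * Q13Z * P12Z = Q12Z * P13Z * P23Z := by decide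
lemma z3 : Q12Z * P13Z * P23Z = Q23Z * Q13Z * Q12Z := by decide
lemma z4 : Q23Z * P13Z * P12Z = P12Z * Q13Z * P23Z := by decide
lemma z5 : P12Z * Q13Z * P23Z = P23Z * P13Z * Q12Z := by decide
lemma z6 : P23Z * P13Z * Q12Z = Q12Z * Q13Z * Q23Z := by decide

end Stmt5Aux

open Stmt5Aux in
/-- Mixed cubic relations among the operators `P^{ij}`, `Q^{ij}` in `End(C^{1|1})^{⊗3}`. -/
theorem stmt5 :
    (P12 * P13 * Q23 = P23 * Q13 * P12 ∧ P23 * Q13 * P12 = Q12 * P13 * P23 ∧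
      Q12 * P13 * P23 = Q23 * Q13 * Q12) ∧
    (Q23 * P13 * P12 = P12 * Q13 * P23 ∧ P12 * Q13 * P23 = P23 * P13 * Q12 ∧
      P23 * P13 * Q12 = Q12 * Q13 * Q23) := by
  refine ⟨⟨?_, ?_, ?_⟩, ?_, ?_, ?_⟩ <;>
    simp only [castP12, castP13, castP23, castQ12, castQ13, castQ23, ← map_mul]
  · exact congrArg cmap z1
  · exact congrArg cmap z2
  · exact congrArg cmap z3
  · exact congrArg cmap z4
  · exact congrArg cmap z5
  · exact congrArg cmap z6
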